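/- For every integer n ≥ 3, the normalised degree variance of the star graph on n vertices satisfies v̄(G*(n,1)) = (n³ − 5n² + 8n − 4)/(n³ − 3n² + 2n). -/

import Mathlib

/-- The perfect quasi-star graph `G*(n,p)`: the simple graph on vertex set `{0,…,n-1}`
(a copy of `{1,…,n}`) in which the first `p` vertices (the dominant vertices) are
adjacent to all other vertices and there are no other edges. -/
def quasiStar (n p : ℕ) : SimpleGraph (Fin n) where
  Adj i j := i ≠ j ∧ ((i : ℕ) < p ∨ (j : ℕ) < p)
  symm := ⟨fun _ _ h => ⟨h.1.symm, h.2.symm⟩⟩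
  loopless := ⟨fun _ h => h.1 rfl⟩

instance (n p : ℕ) : DecidableRel (quasiStar n p).Adj :=
  fun i j => inferInstanceAs (Decidable (i ≠ j ∧ ((i : ℕ) < p ∨ (j : ℕ) < p)))

/-- The degree variance of a finite simple graph `G` on `n` vertices with `m` edges:
`v(G) = (1/(n-1)) · ∑ i, (k_i - 2m/n)^2`. -/
noncomputable def degVar {n : ℕ} (G : SimpleGraph (Fin n)) [DecidableRel G.Adj] : ℝ :=
  (1 / ((n : ℝ) - 1)) *
    ∑ i, ((G.degree i : ℝ) - 2 * (G.edgeFinset.card : ℝ) / n) ^ 2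

/-- The normalised degree variance `v̄(G) = ((n-1)/(n·m·(1-d))) · v(G)`, where
`d = 2m/(n(n-1))` is the density. -/
noncomputable def normDegVar {n : ℕ} (G : SimpleGraph (Fin n)) [DecidableRel G.Adj] : ℝ :=
  ((n : ℝ) - 1) /
      ((n : ℝ) * (G.edgeFinset.card : ℝ) *
        (1 - 2 * (G.edgeFinset.card : ℝ) / ((n : ℝ) * ((n : ℝ) - 1)))) *
    degVar G

lemma star_degree (n : ℕ) (hn : 1 ≤ n) (i : Fin n) :
    (quasiStar n 1).degree i = if (i : ℕ) = 0 then n - 1 else 1 := by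
  classical
  rw [← SimpleGraph.card_neighborFinset_eq_degree]
  by_cases h : (i : ℕ) = 0
  · rw [if_pos h]
    have : (quasiStar n 1).neighborFinset i = Finset.univ.erase i := by
      ext j
      rw [SimpleGraph.mem_neighborFinset]
      simp [quasiStar, h, eq_comm, Ne, Finset.mem_erase]
    rw [this, Finset.card_erase_of_mem (Finset.mem_univ _), Finset.card_univ, Fintype.card_fin]
  · rw [if_neg h]
    have : (quasiStar n 1).neighborFinset i = {(⟨0, hn⟩ : Fin n)} := by
      ext j
      rw [SimpleGraph.mem_neighborFinset]
      simp only [SimpleGraph.mem_neighborFinset, Finset.mem_singleton, quasiStar]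
      constructor
      · rintro ⟨hij, h1 | h1⟩
        · omega
        · exact Fin.ext (by simpa using h1)
      · rintro rfl
        exact ⟨fun he => h (by rw [he]), Or.inr (by simp)⟩
    rw [this, Finset.card_singleton]

lemma star_edges (n : ℕ) (hn : 2 ≤ n) :
    (quasiStar n 1).edgeFinset.card = n - 1 := by
  classical
  have h2 := SimpleGraph.sum_degrees_eq_twice_card_edges (quasiStar n 1)
  have hs : ∑ i : Fin n, (quasiStar n 1).degree i = 2 * (n - 1) := by
    calc ∑ i : Fin n, (quasiStar n 1).degree i
        = ∑ i : Fin n, (if (i : ℕ) = 0 then n - 1 else 1) :=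
          Finset.sum_congr rfl fun i _ => star_degree n (by omega) i
      _ = ∑ i : Fin n, ((if (i : ℕ) = 0 then n - 2 else 0) + 1) :=
          Finset.sum_congr rfl fun i _ => by split <;> omega
      _ = (∑ i : Fin n, (if (i : ℕ) = 0 then n - 2 else 0)) + n := by
          rw [Finset.sum_add_distrib]; simp
      _ = (n - 2) + n := by
          congr 1
          rw [Finset.sum_eq_single (⟨0, by omega⟩ : Fin n)]
          · simp
          · intro b _ hb
            rw [if_neg]
            intro h0; exact hb (Fin.ext h0)
          · simp
      _ = 2 * (n - 1) := by omega
  omega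

/-- **Normalised degree variance of the star graph.**  For every integer `n ≥ 3`, the
star graph on `n` vertices (the perfect quasi-star graph `G*(n,1)`) satisfies
`v̄(G*(n,1)) = (n³ - 5n² + 8n - 4)/(n³ - 3n² + 2n)`. -/
theorem normDegVar_star (n : ℕ) (hn : 3 ≤ n) :
    normDegVar (quasiStar n 1)
      = ((n : ℝ) ^ 3 - 5 * (n : ℝ) ^ 2 + 8 * (n : ℝ) - 4)
          / ((n : ℝ) ^ 3 - 3 * (n : ℝ) ^ 2 + 2 * (n : ℝ)) := by
  have hx : (3 : ℝ) ≤ (n : ℝ) := by exact_mod_cast hn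
  have hn0 : (n : ℝ) ≠ 0 := by linarith
  have h1 : (n : ℝ) - 1 ≠ 0 := by linarith
  have h2 : (n : ℝ) - 2 ≠ 0 := by linarith
  have hm : (((quasiStar n 1).edgeFinset.card : ℕ) : ℝ) = (n : ℝ) - 1 := by
    rw [star_edges n (by omega)]
    have : (1 : ℕ) ≤ n := by omega
    push_cast [Nat.cast_sub this]
    ring
  have hdeg : ∀ i : Fin n, (((quasiStar n 1).degree i : ℕ) : ℝ)
      = if (i : ℕ) = 0 then (n : ℝ) - 1 else 1 := by
    intro i
    rw [star_degree n (by omega) i]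
    split
    · have : (1 : ℕ) ≤ n := by omega
      push_cast [Nat.cast_sub this]; ring
    · simp
  unfold normDegVar degVar
  rw [hm]
  set c : ℝ := 2 * ((n : ℝ) - 1) / (n : ℝ) with hc
  have hsum : ∑ i : Fin n, ((((quasiStar n 1).degree i : ℕ) : ℝ) - c) ^ 2
      = ((((n : ℝ) - 1) - c) ^ 2 - (1 - c) ^ 2) + (n : ℝ) * (1 - c) ^ 2 := by
    calc ∑ i : Fin n, ((((quasiStar n 1).degree i : ℕ) : ℝ) - c) ^ 2
        = ∑ i : Fin n, ((if (i : ℕ) = 0 then (((n : ℝ) - 1) - c) ^ 2 - (1 - c) ^ 2 else 0)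
            + (1 - c) ^ 2) := by
          refine Finset.sum_congr rfl fun i _ => ?_
          rw [hdeg i]
          split <;> ring
      _ = ((((n : ℝ) - 1) - c) ^ 2 - (1 - c) ^ 2) + (n : ℝ) * (1 - c) ^ 2 := by
          rw [Finset.sum_add_distrib, Finset.sum_const, Finset.card_univ, Fintype.card_fin]
          congr 1
          · rw [Finset.sum_eq_single (⟨0, by omega⟩ : Fin n)]
            · simp
            · intro b _ hb
              rw [if_neg fun h0 => hb (Fin.ext h0)]
            · simp
          · simp [nsmul_eq_mul]
  rw [hsum, hc]
  have hD : (n : ℝ) ^ 3 - 3 * (n : ℝ) ^ 2 + 2 * (n : ℝ) ≠ 0 := by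
    have e : (n : ℝ) ^ 3 - 3 * (n : ℝ) ^ 2 + 2 * (n : ℝ)
        = (n : ℝ) * ((n : ℝ) - 1) * ((n : ℝ) - 2) := by ring
    rw [e]
    exact mul_ne_zero (mul_ne_zero hn0 h1) h2
  have e1 : 1 - 2 * ((n : ℝ) - 1) / ((n : ℝ) * ((n : ℝ) - 1)) = ((n : ℝ) - 2) / (n : ℝ) := by
    field_simp
  rw [e1, eq_div_iff hD]
  field_simp
  ring
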